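/- Let r ≥ 0 and let (x_n) be a sequence in an S-metric space (X,S). Then st-LIM^r x_n is a closed set in the topology induced by the S-metric. -/
import Mathlib


open Filter

open scoped Classical in
/-- Natural density: `A ⊆ ℕ` has density `d` if `|{k ∈ A : k < n}|/n → d`. -/
def HasDensity (A : Set ℕ) (d : ℝ) : Prop :=
  Filter.Tendsto
    (fun n : ℕ => (((Finset.range n).filter (fun k => k ∈ A)).card : ℝ) / n)
    Filter.atTop (nhds d)

/-- `S` is an S-metric on `X`. -/
structure IsSMetric {X : Type*} (S : X → X → X → ℝ) : Prop where
  nonneg : ∀ x y z, 0 ≤ S x y z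
  eq_zero_iff : ∀ x y z, S x y z = 0 ↔ x = y ∧ y = z
  triangle : ∀ x y z a, S x y z ≤ S x x a + S y y a + S z z a

/-- Ordinary convergence of a sequence in an S-metric space. -/
def SConvergesTo {X : Type*} (S : X → X → X → ℝ) (x : ℕ → X) (l : X) : Prop :=
  ∀ ε : ℝ, 0 < ε → ∃ N : ℕ, ∀ n ≥ N, S (x n) (x n) l < ε

/-- Statistical convergence of a sequence in an S-metric space. -/
def SStatConvergesTo {X : Type*} (S : X → X → X → ℝ) (x : ℕ → X) (l : X) : Prop :=
  ∀ ε : ℝ, 0 < ε → HasDensity {n : ℕ | ε ≤ S (x n) (x n) l} 0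

/-- Cauchy sequence in an S-metric space. -/
def SCauchy {X : Type*} (S : X → X → X → ℝ) (x : ℕ → X) : Prop :=
  ∀ ε : ℝ, 0 < ε → ∃ k : ℕ, ∀ n ≥ k, ∀ m ≥ k, S (x n) (x n) (x m) < ε

/-- Statistically Cauchy sequence in an S-metric space. -/
def SStatCauchy {X : Type*} (S : X → X → X → ℝ) (x : ℕ → X) : Prop :=
  ∀ ε : ℝ, 0 < ε → ∃ N : ℕ, HasDensity {n : ℕ | ε ≤ S (x n) (x n) (x N)} 0

/-- Statistically bounded sequence in an S-metric space. -/
def SStatBounded {X : Type*} (S : X → X → X → ℝ) (x : ℕ → X) : Prop :=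
  ∀ u : X, ∃ B : ℝ, 0 < B ∧ HasDensity {n : ℕ | B ≤ S (x n) (x n) u} 0

/-- Rough convergence with roughness degree `r`. -/
def SRoughConvergesTo {X : Type*} (S : X → X → X → ℝ) (r : ℝ) (x : ℕ → X) (p : X) : Prop :=
  ∀ ε : ℝ, 0 < ε → ∃ k : ℕ, ∀ n ≥ k, S (x n) (x n) p < r + ε

/-- Rough statistical convergence with roughness degree `r`. -/
def SRoughStatConvergesTo {X : Type*} (S : X → X → X → ℝ) (r : ℝ) (x : ℕ → X) (p : X) : Prop :=
  ∀ ε : ℝ, 0 < ε → HasDensity {n : ℕ | r + ε ≤ S (x n) (x n) p} 0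

/-- The rough statistical limit set `st-LIM^r x_n`. -/
def stLIM {X : Type*} (S : X → X → X → ℝ) (r : ℝ) (x : ℕ → X) : Set X :=
  {p : X | SRoughStatConvergesTo S r x p}

/-- The topology on `X` generated by the open balls of the S-metric. -/
def sBallTopology {X : Type*} (S : X → X → X → ℝ) : TopologicalSpace X :=
  TopologicalSpace.generateFrom
    {B : Set X | ∃ c : X, ∃ ε : ℝ, 0 < ε ∧ B = {y : X | S y y c < ε}}


lemma smetric_self {X : Type*} {S : X → X → X → ℝ} (hS : IsSMetric S) (x : X) :
    S x x x = 0 := (hS.eq_zero_iff x x x).mpr ⟨rfl, rfl⟩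

lemma smetric_symm {X : Type*} {S : X → X → X → ℝ} (hS : IsSMetric S) (x y : X) :
    S x x y = S y y x := by
  have h1 := hS.triangle x x y x
  have h2 := hS.triangle y y x y
  rw [smetric_self hS] at h1 h2
  linarith

lemma hasDensity_zero_mono {A B : Set ℕ} (hAB : A ⊆ B) (hB : HasDensity B 0) :
    HasDensity A 0 := by
  classical
  unfold HasDensity at *
  refine squeeze_zero (fun n => by positivity) (g := fun n : ℕ =>
    (((Finset.range n).filter (fun k => k ∈ B)).card : ℝ) / n) ?_ hB
  intro n
  have hc : (((Finset.range n).filter (fun k => k ∈ A)).card : ℝ) ≤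
      (((Finset.range n).filter (fun k => k ∈ B)).card : ℝ) := by
    have : (Finset.range n).filter (fun k => k ∈ A) ⊆
        (Finset.range n).filter (fun k => k ∈ B) := by
      intro a ha
      simp only [Finset.mem_filter] at ha ⊢
      exact ⟨ha.1, hAB ha.2⟩
    exact_mod_cast Finset.card_le_card this
  exact div_le_div_of_nonneg_right hc (Nat.cast_nonneg n) |>.trans le_rfl

theorem stmt_15 {X : Type*} [Nonempty X] (S : X → X → X → ℝ) (hS : IsSMetric S)
    (r : ℝ) (hr : 0 ≤ r) (x : ℕ → X) :
    @IsClosed X (sBallTopology S) (stLIM S r x) := by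
  letI : TopologicalSpace X := sBallTopology S
  rw [← isOpen_compl_iff]
  rw [isOpen_iff_forall_mem_open]
  intro p hp
  -- p is not a rough statistical limit: extract a bad ε
  simp only [Set.mem_compl_iff, stLIM, Set.mem_setOf_eq, SRoughStatConvergesTo, not_forall] at hp
  obtain ⟨ε, hε, hbad⟩ := hp
  refine ⟨{y : X | S y y p < ε / 4}, ?_, ?_, ?_⟩
  · -- the ball is contained in the complement
    intro q hq
    simp only [Set.mem_setOf_eq] at hq
    intro hqlim
    apply hbad
    have h0 : HasDensity {n : ℕ | r + ε / 4 ≤ S (x n) (x n) q} 0 := hqlim (ε / 4) (by linarith)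
    refine hasDensity_zero_mono ?_ h0
    intro n hn
    simp only [Set.mem_setOf_eq] at hn ⊢
    by_contra hlt
    push_neg at hlt
    -- S x_n x_n p ≤ S x_n x_n q + 2 S p p q, and S p p q = S q q p < ε/4
    have htri := hS.triangle p p (x n) q
    rw [smetric_symm hS (x n) p] at hn
    rw [smetric_symm hS p q] at htri
    linarith
  · -- the ball is open
    exact TopologicalSpace.GenerateOpen.basic _ ⟨p, ε / 4, by linarith, rfl⟩
  · -- p is in the ball
    simp only [Set.mem_setOf_eq, smetric_self hS]
    linarith
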